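/- Under Assumption 1 (B ≥ 0, C ≤ 0 entrywise, and I⊗D + (Aᵀ⊗I)Π a nonsingular M-matrix), the fixed-point iterates X_0 = 0, S_T(X_{k+1}) = X_kᵀ B X_k − C satisfy X_{k+1} ≥ X_k entrywise for all k ≥ 0; in particular every X_k is nonnegative. -/

import Mathlib

open Matrix

/-- A real square matrix is a Z-matrix if all its off-diagonal entries are nonpositive. -/
def IsZMatrix {m : Type*} [Fintype m] [DecidableEq m] (A : Matrix m m ℝ) : Prop :=
  ∀ i j, i ≠ j → A i j ≤ 0

/-- A real square matrix is a nonsingular M-matrix if it can be written as `s • 1 - N`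
with `N` entrywise nonnegative and `s` strictly larger than the spectral radius of `N`
(i.e., every complex eigenvalue of `N` has modulus strictly less than `s`). -/
def IsNonsingMMatrix {m : Type*} [Fintype m] [DecidableEq m] (A : Matrix m m ℝ) : Prop :=
  ∃ (s : ℝ) (N : Matrix m m ℝ),
    0 < s ∧ (∀ i j, 0 ≤ N i j) ∧ A = s • (1 : Matrix m m ℝ) - N ∧
    ∀ μ ∈ spectrum ℂ (N.map (algebraMap ℝ ℂ)), ‖μ‖ < s

open Kronecker

/-- The vec-permutation matrix `Π = Σ_{i,j} E_{i,j} ⊗ E_{j,i}`, where `E_{i,j}` is the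
matrix with `(i,j)` entry `1` and zeros elsewhere. -/
def vecPerm (n : ℕ) : Matrix (Fin n × Fin n) (Fin n × Fin n) ℝ :=
  ∑ i : Fin n, ∑ j : Fin n,
    (Matrix.single i j (1 : ℝ)) ⊗ₖ (Matrix.single j i (1 : ℝ))

/-- Column-stacking vectorization: `vecM X (j, i) = X i j`. -/
def vecM {n : ℕ} (X : Matrix (Fin n) (Fin n) ℝ) : Fin n × Fin n → ℝ := fun p => X p.2 p.1

set_option linter.unusedSectionVars false

open Filter
open scoped ENNReal NNReal

section MM
variable {m : Type*} [Fintype m] [DecidableEq m]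
attribute [local instance] Matrix.linftyOpNormedRing Matrix.linftyOpNormedAlgebra

noncomputable local instance : CompleteSpace (Matrix m m ℂ) :=
  (inferInstance : CompleteSpace (m → m → ℂ))

lemma entry_norm_le_linfty (M : Matrix m m ℂ) (i j : m) : ‖M i j‖ ≤ ‖M‖ := by
  have h : ‖M i j‖₊ ≤ ‖M‖₊ := by
    rw [Matrix.linfty_opNNNorm_def]
    exact le_trans (Finset.single_le_sum (f := fun j' => ‖M i j'‖₊) (fun _ _ => zero_le)
      (Finset.mem_univ j))
      (Finset.le_sup (f := fun i => ∑ j : m, ‖M i j‖₊) (Finset.mem_univ i))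
  exact_mod_cast h

lemma entry_mul_nonneg {P Q : Matrix m m ℝ} (hP : ∀ i j, 0 ≤ P i j) (hQ : ∀ i j, 0 ≤ Q i j) :
    ∀ i j, 0 ≤ (P * Q) i j := fun i j => by
  rw [Matrix.mul_apply]
  exact Finset.sum_nonneg fun k _ => mul_nonneg (hP i k) (hQ k j)

lemma entry_pow_nonneg {P : Matrix m m ℝ} (hP : ∀ i j, 0 ≤ P i j) (t : ℕ) :
    ∀ i j, 0 ≤ (P ^ t) i j := by
  induction t with
  | zero => intro i j; rw [pow_zero]; by_cases h : i = j <;> simp [Matrix.one_apply, h]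
  | succ t ih => rw [pow_succ]; exact entry_mul_nonneg ih hP

lemma mmatrix_exists_nonneg_left_inv {M : Matrix m m ℝ} (h : IsNonsingMMatrix M) :
    ∃ T : Matrix m m ℝ, (∀ i j, 0 ≤ T i j) ∧ T * M = 1 := by
  obtain ⟨s, N, hs, hN, rfl, hspec⟩ := h
  cases isEmpty_or_nonempty m with
  | inl hE => exact ⟨0, fun i j => le_refl _, Subsingleton.elim _ _⟩
  | inr hE =>
  set f : ℝ →+* ℂ := (algebraMap ℝ ℂ)
  set Nc : Matrix m m ℂ := N.map f with hNc
  -- spectral radius bound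
  have hrad : spectralRadius ℂ Nc < ENNReal.ofReal s := by
    rcases (spectrum ℂ Nc).eq_empty_or_nonempty with he | hne
    · rw [spectralRadius, he]
      simpa using ENNReal.ofReal_pos.mpr hs
    · have h1 : ∀ k ∈ spectrum ℂ Nc, ‖k‖₊ < s.toNNReal := by
        intro k hk
        have := hspec k hk
        rw [← NNReal.coe_lt_coe, coe_nnnorm, Real.coe_toNNReal _ hs.le]
        simpa using this
      have := spectrum.spectralRadius_lt_of_forall_lt_of_nonempty hne h1
      rwa [ENNReal.ofReal]
  -- Gelfand
  obtain ⟨k, hk1, hk⟩ : ∃ k : ℕ, 1 ≤ k ∧ (‖Nc ^ k‖₊ : ℝ≥0∞) ^ (1/(k:ℝ)) < ENNReal.ofReal s := by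
    have gel := spectrum.pow_nnnorm_pow_one_div_tendsto_nhds_spectralRadius Nc
    rcases ((gel.eventually_lt_const hrad).and (eventually_ge_atTop 1)).exists with ⟨k, h1, h2⟩
    exact ⟨k, h2, h1⟩
  have hkR : (0:ℝ) < (k:ℝ) := by exact_mod_cast hk1
  have hNk : ‖Nc ^ k‖ < s ^ k := by
    have h2 := ENNReal.rpow_lt_rpow hk hkR
    rw [← ENNReal.rpow_mul, one_div_mul_cancel (ne_of_gt hkR), ENNReal.rpow_one] at h2
    rw [ENNReal.ofReal_rpow_of_pos hs, Real.rpow_natCast] at h2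
    have h3 : ENNReal.ofReal ‖Nc ^ k‖ < ENNReal.ofReal (s ^ k) := by
      rwa [ofReal_norm, enorm_eq_nnnorm]
    exact (ENNReal.ofReal_lt_ofReal_iff_of_nonneg (norm_nonneg _)).mp h3
  -- scaled matrix
  set N' : Matrix m m ℝ := s⁻¹ • N with hN'def
  have hsne : s ≠ 0 := ne_of_gt hs
  have hN' : ∀ i j, 0 ≤ N' i j := fun i j =>
    mul_nonneg (inv_nonneg.mpr hs.le) (hN i j)
  have hmapN' : N'.map f = ((s⁻¹ : ℝ) : ℂ) • Nc := by
    ext i j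
    simp [hN'def, hNc, Matrix.map_apply, Matrix.smul_apply, smul_eq_mul, f]
  have hP : ‖(N'.map f) ^ k‖ < 1 := by
    rw [hmapN', smul_pow, norm_smul]
    have h1 : ‖(((s⁻¹ : ℝ) : ℂ)) ^ k‖ = (s⁻¹) ^ k := by
      rw [norm_pow, Complex.norm_real, Real.norm_eq_abs, abs_of_pos (inv_pos.mpr hs)]
    rw [h1, inv_pow]
    calc (s ^ k)⁻¹ * ‖Nc ^ k‖ < (s ^ k)⁻¹ * s ^ k :=
          mul_lt_mul_of_pos_left hNk (inv_pos.mpr (pow_pos hs k))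
      _ = 1 := inv_mul_cancel₀ (ne_of_gt (pow_pos hs k))
  -- invertibility of 1 - N'
  have hsmul : (1 : Matrix m m ℂ) - N'.map f = ((s⁻¹ : ℝ) : ℂ) • ((s : ℂ) • 1 - Nc) := by
    rw [hmapN', smul_sub, smul_smul]
    norm_num [hsne]
  have hunitc : IsUnit ((1 : Matrix m m ℂ) - N'.map f) := by
    have hs_not : (s : ℂ) ∉ spectrum ℂ Nc := by
      intro hmem
      have := hspec _ hmem
      simp [Complex.norm_real, abs_of_pos hs] at this
    have hu : IsUnit (algebraMap ℂ (Matrix m m ℂ) (s : ℂ) - Nc) := spectrum.notMem_iff.mp hs_not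
    rw [Algebra.algebraMap_eq_smul_one] at hu
    rw [Matrix.isUnit_iff_isUnit_det] at hu ⊢
    rw [hsmul, Matrix.det_smul]
    exact (IsUnit.pow _ (by simp [hsne] : IsUnit (((s⁻¹:ℝ):ℂ)))).mul hu
  have hmapsub : ((1 : Matrix m m ℝ) - N').map f = (1 : Matrix m m ℂ) - N'.map f := by
    ext i j
    by_cases h : i = j <;>
      simp [Matrix.map_apply, Matrix.sub_apply, Matrix.one_apply, h]
  have hdet : ((1 : Matrix m m ℝ) - N').det ≠ 0 := by
    intro h0
    have : ((1 : Matrix m m ℂ) - N'.map f).det ≠ 0 :=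
      isUnit_iff_ne_zero.mp (Matrix.isUnit_iff_isUnit_det _ |>.mp hunitc)
    apply this
    rw [← hmapsub, ← RingHom.mapMatrix_apply, ← RingHom.map_det, h0, map_zero]
  have hdetu : IsUnit ((1 : Matrix m m ℝ) - N').det := isUnit_iff_ne_zero.mpr hdet
  set T : Matrix m m ℝ := ((1 : Matrix m m ℝ) - N')⁻¹ with hTdef
  have hTl : T * (1 - N') = 1 := Matrix.nonsing_inv_mul _ hdetu
  have hTr : (1 - N') * T = 1 := Matrix.mul_nonsing_inv _ hdetu
  -- nonnegativity of T
  have hTpos : ∀ i j, 0 ≤ T i j := by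
    intro i j
    have hid : ∀ J : ℕ, T i j - (T * (N' ^ k) ^ J) i j
        = (∑ t ∈ Finset.range (k * J), N' ^ t) i j := by
      intro J
      set S : Matrix m m ℝ := ∑ t ∈ Finset.range (k * J), N' ^ t with hS
      have h1 : (1 - N') * S = 1 - N' ^ (k * J) := by
        have hg := mul_geom_sum N' (k * J)
        rw [sub_mul, one_mul] at hg ⊢
        rw [← neg_sub (N' * S) S, hg, neg_sub]
      have h2 : T * (1 - N' ^ (k * J)) = S := by
        rw [← h1, ← mul_assoc, hTl, one_mul]
      rw [mul_sub, mul_one] at h2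
      have h3 : T - T * (N' ^ k) ^ J = S := by rw [← pow_mul]; exact h2
      calc T i j - (T * (N' ^ k) ^ J) i j = (T - T * (N' ^ k) ^ J) i j := by
            simp [Matrix.sub_apply]
        _ = S i j := by rw [h3]
    have hSpos : ∀ J : ℕ, 0 ≤ (∑ t ∈ Finset.range (k * J), N' ^ t) i j := by
      intro J
      rw [Matrix.sum_apply]
      exact Finset.sum_nonneg fun t _ => entry_pow_nonneg hN' t i j
    have hg0 : Tendsto (fun J : ℕ => (T * (N' ^ k) ^ J) i j) atTop (nhds 0) := by
      have hbd : ∀ J : ℕ, ‖(T * (N' ^ k) ^ J) i j‖ ≤ ‖T.map f‖ * ‖(N'.map f) ^ k‖ ^ J := by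
        intro J
        have e1 : (((T * (N' ^ k) ^ J)).map f) i j = f ((T * (N' ^ k) ^ J) i j) := rfl
        have e2 : ‖(T * (N' ^ k) ^ J) i j‖ = ‖(((T * (N' ^ k) ^ J)).map f) i j‖ := by
          rw [e1]; simp [f, Complex.norm_real]
        rw [e2]
        refine le_trans (entry_norm_le_linfty _ i j) ?_
        have e3 : ((T * (N' ^ k) ^ J)).map f = T.map f * ((N'.map f) ^ k) ^ J := by
          have := (RingHom.mapMatrix (m := m) f).map_mul T ((N' ^ k) ^ J)
          have h4 : (RingHom.mapMatrix (m := m) f) ((N' ^ k) ^ J)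
              = ((N'.map f) ^ k) ^ J := by
            rw [map_pow, map_pow]; rfl
          rw [← h4]; exact this
        rw [e3]
        refine le_trans (Matrix.linfty_opNorm_mul _ _) ?_
        exact mul_le_mul_of_nonneg_left (norm_pow_le _ J) (norm_nonneg _)
      have hlim : Tendsto (fun J : ℕ => ‖T.map f‖ * ‖(N'.map f) ^ k‖ ^ J) atTop (nhds 0) := by
        rw [show (0:ℝ) = ‖T.map f‖ * 0 by ring]
        exact (tendsto_pow_atTop_nhds_zero_of_lt_one (norm_nonneg _) hP).const_mul _
      exact squeeze_zero_norm hbd hlim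
    have : ∀ J : ℕ, 0 ≤ T i j - (T * (N' ^ k) ^ J) i j := fun J => (hid J) ▸ hSpos J
    have hlim2 : Tendsto (fun J : ℕ => T i j - (T * (N' ^ k) ^ J) i j) atTop (nhds (T i j)) := by
      simpa using (tendsto_const_nhds (x := T i j)).sub hg0
    exact ge_of_tendsto' hlim2 this |>.trans_eq rfl |> fun h => h
  -- assemble
  refine ⟨s⁻¹ • T, fun i j => mul_nonneg (inv_nonneg.mpr hs.le) (hTpos i j), ?_⟩
  have hMs : s • (1 : Matrix m m ℝ) - N = s • ((1 : Matrix m m ℝ) - N') := by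
    rw [smul_sub, hN'def, smul_smul, mul_inv_cancel₀ hsne, one_smul]
  rw [hMs, smul_mul_assoc, Matrix.mul_smul, smul_smul, inv_mul_cancel₀ hsne, one_smul, hTl]
end MM

lemma vecPerm_mulVec {n : ℕ} (X : Matrix (Fin n) (Fin n) ℝ) :
    vecPerm n *ᵥ vecM X = vecM Xᵀ := by
  ext ⟨a, b⟩
  simp only [vecPerm, mulVec, dotProduct, vecM, Matrix.sum_apply,
    Matrix.kroneckerMap_apply, Matrix.single, Matrix.of_apply, Matrix.transpose_apply,
    Fintype.sum_prod_type]
  simp [Finset.sum_ite_eq, Finset.sum_ite_eq', ite_and, Finset.mul_sum, Finset.sum_mul]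

lemma kron_one_mulVec {n : ℕ} (D X : Matrix (Fin n) (Fin n) ℝ) :
    ((1 : Matrix (Fin n) (Fin n) ℝ) ⊗ₖ D) *ᵥ vecM X = vecM (D * X) := by
  ext ⟨a, b⟩
  simp only [mulVec, dotProduct, vecM, Matrix.kroneckerMap_apply, Matrix.one_apply,
    Fintype.sum_prod_type, Matrix.mul_apply]
  simp [ite_mul, Finset.sum_ite_eq, Finset.sum_ite_eq', mul_comm]

lemma kron_one_right_mulVec {n : ℕ} (A Y : Matrix (Fin n) (Fin n) ℝ) :
    (Aᵀ ⊗ₖ (1 : Matrix (Fin n) (Fin n) ℝ)) *ᵥ vecM Y = vecM (Y * A) := by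
  ext ⟨a, b⟩
  simp only [mulVec, dotProduct, vecM, Matrix.kroneckerMap_apply, Matrix.one_apply,
    Fintype.sum_prod_type, Matrix.mul_apply, Matrix.transpose_apply]
  simp [mul_ite, ite_mul, Finset.sum_ite_eq, Finset.sum_ite_eq', mul_comm]

lemma sylv_mulVec {n : ℕ} (A D X : Matrix (Fin n) (Fin n) ℝ) :
    ((1 : Matrix (Fin n) (Fin n) ℝ) ⊗ₖ D + (Aᵀ ⊗ₖ (1 : Matrix (Fin n) (Fin n) ℝ)) * vecPerm n)
      *ᵥ vecM X = vecM (D * X + Xᵀ * A) := by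
  rw [Matrix.add_mulVec, ← Matrix.mulVec_mulVec, vecPerm_mulVec, kron_one_mulVec,
    kron_one_right_mulVec]
  ext p
  simp [vecM, Matrix.add_apply]

lemma mulVec_entry_nonneg {m : Type*} [Fintype m] {T : Matrix m m ℝ} {v : m → ℝ}
    (hT : ∀ i j, 0 ≤ T i j) (hv : ∀ p, 0 ≤ v p) : ∀ p, 0 ≤ (T *ᵥ v) p := fun p =>
  Finset.sum_nonneg fun q _ => mul_nonneg (hT p q) (hv q)

lemma quad_mono {n : ℕ} {B Y Z : Matrix (Fin n) (Fin n) ℝ} (hB : ∀ i j, 0 ≤ B i j)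
    (hY0 : ∀ i j, 0 ≤ Y i j) (hYZ : ∀ i j, Y i j ≤ Z i j) :
    ∀ i j, (Yᵀ * B * Y) i j ≤ (Zᵀ * B * Z) i j := by
  intro i j
  simp only [Matrix.mul_apply, Matrix.transpose_apply]
  refine Finset.sum_le_sum fun q _ => mul_le_mul ?_ (hYZ q j) (hY0 q j) ?_
  · exact Finset.sum_le_sum fun p _ => mul_le_mul_of_nonneg_right (hYZ p i) (hB p q)
  · exact Finset.sum_nonneg fun p _ =>
      mul_nonneg ((hY0 p i).trans (hYZ p i)) (hB p q)

theorem fixedPoint_iterates_monotone_nonneg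
    {n : ℕ} (A B C D : Matrix (Fin n) (Fin n) ℝ)
    (hB : ∀ i j, 0 ≤ B i j) (hC : ∀ i j, C i j ≤ 0)
    (hM : IsNonsingMMatrix
      ((1 : Matrix (Fin n) (Fin n) ℝ) ⊗ₖ D
        + (Aᵀ ⊗ₖ (1 : Matrix (Fin n) (Fin n) ℝ)) * vecPerm n))
    (X : ℕ → Matrix (Fin n) (Fin n) ℝ) (hX0 : X 0 = 0)
    (hrec : ∀ k, D * X (k + 1) + (X (k + 1))ᵀ * A = (X k)ᵀ * B * X k - C) :
    (∀ k, ∀ i j, X k i j ≤ X (k + 1) i j) ∧ (∀ k, ∀ i j, 0 ≤ X k i j) := by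
  set M : Matrix (Fin n × Fin n) (Fin n × Fin n) ℝ :=
    (1 : Matrix (Fin n) (Fin n) ℝ) ⊗ₖ D
      + (Aᵀ ⊗ₖ (1 : Matrix (Fin n) (Fin n) ℝ)) * vecPerm n with hMdef
  obtain ⟨T, hT, hTM⟩ := mmatrix_exists_nonneg_left_inv hM
  have key : ∀ x : Fin n × Fin n → ℝ, (∀ p, 0 ≤ (M *ᵥ x) p) → ∀ p, 0 ≤ x p := by
    intro x hx p
    have hxx : x = T *ᵥ (M *ᵥ x) := by
      rw [Matrix.mulVec_mulVec, hTM, Matrix.one_mulVec]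
    rw [hxx]
    exact mulVec_entry_nonneg hT hx p
  have H : ∀ k, (∀ i j, 0 ≤ X k i j) ∧ (∀ i j, X k i j ≤ X (k + 1) i j) := by
    intro k
    induction k with
    | zero =>
      constructor
      · intro i j; rw [hX0]; exact le_refl 0
      · intro i j
        have h1 : ∀ p, 0 ≤ (M *ᵥ vecM (X 1)) p := by
          rw [hMdef, sylv_mulVec, hrec 0, hX0]
          intro p
          simp only [vecM, Matrix.sub_apply, Matrix.transpose_apply]
          simpa using hC p.2 p.1
        have := key _ h1 (j, i)
        rw [hX0]
        simpa [vecM] using this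
    | succ k ih =>
      obtain ⟨h0, h1⟩ := ih
      have h0' : ∀ i j, 0 ≤ X (k + 1) i j := fun i j => (h0 i j).trans (h1 i j)
      refine ⟨h0', ?_⟩
      intro i j
      have hq : ∀ p, 0 ≤ (M *ᵥ (vecM (X (k + 2)) - vecM (X (k + 1)))) p := by
        intro p
        rw [Matrix.mulVec_sub, hMdef, sylv_mulVec, sylv_mulVec, hrec (k + 1), hrec k]
        simp only [Pi.sub_apply, vecM, Matrix.sub_apply]
        have := quad_mono hB h0 h1 p.2 p.1
        linarith
      have := key _ hq (j, i)
      simp only [Pi.sub_apply, vecM] at this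
      linarith
  exact ⟨fun k => (H k).2, fun k => (H k).1⟩
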